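/- Preliminary bound for the rank-truncated middle matrix (Proposition 8.4): Let Ũ_k be a best rank-k approximation of Ũ. Writing w = ‖W_{k,I}†‖_F and v = ‖V_{k,J}†‖_F, one has ‖A − C̃ Ũ_k† R̃‖_F ≤ w‖E_I‖_F + v‖E_J‖_F + 4·w·v·‖E_{I,J}‖_F + ‖Ũ_k†‖_F · [ (w‖E_I‖_F + v‖E_J‖_F + w·v·‖E_{I,J}‖_F)·‖E_{I,J}‖_F + ‖E_I‖_F·‖E_J‖_F ]. -/

import Mathlib

open Matrix

noncomputable section

variable {𝕂 : Type} [RCLike 𝕂]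

/-- The Frobenius norm of a matrix. -/
noncomputable def frobNorm {m n : ℕ} (M : Matrix (Fin m) (Fin n) 𝕂) : ℝ :=
  Real.sqrt (∑ i, ∑ j, ‖M i j‖ ^ 2)

/-- The `i`-th largest singular value of a matrix (1-indexed), i.e. the `i`-th largest
square root of an eigenvalue of `Mᴴ * M`. -/
noncomputable def sigma {m n : ℕ} (M : Matrix (Fin m) (Fin n) 𝕂) (i : ℕ) : ℝ :=
  ((List.ofFn fun j : Fin n =>
      Real.sqrt ((Matrix.isHermitian_conjTranspose_mul_self M).eigenvalues j)).insertionSort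
      (· ≥ ·)).getD (i - 1) 0

/-- The spectral norm: the largest singular value. -/
noncomputable def specNorm {m n : ℕ} (M : Matrix (Fin m) (Fin n) 𝕂) : ℝ := sigma M 1

/-- `P` is the Moore–Penrose pseudoinverse of `M`: the four Penrose conditions. -/
def IsMPInv {m n : ℕ} (M : Matrix (Fin m) (Fin n) 𝕂) (P : Matrix (Fin n) (Fin m) 𝕂) : Prop :=
  M * P * M = M ∧ P * M * P = P ∧ (M * P)ᴴ = M * P ∧ (P * M)ᴴ = P * M

/-- `Mr` is a truncated SVD of order `r` of `M`, i.e. a best rank-`r` approximation of `M`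
(equivalently, a matrix obtained from an SVD of `M` by keeping the `r` largest singular
values and zeroing out the rest). -/
def IsTruncSVD {m n : ℕ} (M Mr : Matrix (Fin m) (Fin n) 𝕂) (r : ℕ) : Prop :=
  Mr.rank ≤ r ∧ ∀ B : Matrix (Fin m) (Fin n) 𝕂, B.rank ≤ r → frobNorm (M - Mr) ≤ frobNorm (M - B)

/-- `Mt = [M]_τ`: the matrix obtained from an SVD of `M` by setting to zero every singular
value strictly less than `τ` (i.e. keeping exactly the singular values `≥ τ`). -/
def IsThresh {m n : ℕ} (M Mt : Matrix (Fin m) (Fin n) 𝕂) (τ : ℝ) : Prop :=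
  IsTruncSVD M Mt (Nat.card {i : Fin (min m n) // τ ≤ sigma M ((i : ℕ) + 1)})

/-- The volume of a matrix: the product of its `min p q` largest singular values. -/
noncomputable def vol {p q : ℕ} (M : Matrix (Fin p) (Fin q) 𝕂) : ℝ :=
  ∏ i ∈ Finset.range (min p q), sigma M (i + 1)

end

section Helpers

attribute [local instance] Matrix.frobeniusSeminormedAddCommGroup

variable {𝕂 : Type} [RCLike 𝕂]

lemma frobNorm_eq_norm {m n : ℕ} (M : Matrix (Fin m) (Fin n) 𝕂) : frobNorm M = ‖M‖ := by
  rw [frobNorm, Matrix.frobenius_norm_def, ← Real.sqrt_eq_rpow]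
  congr 1
  refine Finset.sum_congr rfl fun i _ => Finset.sum_congr rfl fun j _ => ?_
  rw [Real.rpow_two]

lemma frob_sq_eq_trace {m n : ℕ} (M : Matrix (Fin m) (Fin n) 𝕂) :
    ‖M‖ ^ 2 = RCLike.re (Mᴴ * M).trace := by
  have h0 : (0:ℝ) ≤ ∑ i, ∑ j, ‖M i j‖ ^ 2 :=
    Finset.sum_nonneg fun i _ => Finset.sum_nonneg fun j _ => sq_nonneg _
  have h1 : ‖M‖ ^ 2 = ∑ i, ∑ j, ‖M i j‖ ^ 2 := by
    rw [← frobNorm_eq_norm, frobNorm, Real.sq_sqrt h0]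
  rw [h1, Matrix.trace, map_sum, Finset.sum_comm]
  refine Finset.sum_congr rfl fun j _ => ?_
  simp only [Matrix.diag_apply, Matrix.mul_apply, Matrix.conjTranspose_apply, map_sum]
  refine Finset.sum_congr rfl fun i _ => ?_
  rw [RCLike.star_def, RCLike.conj_mul]
  norm_cast

lemma frob_pythagoras {a b : ℕ} (X Y : Matrix (Fin a) (Fin b) 𝕂) (h : (Xᴴ * Y).trace = 0) :
    ‖X + Y‖ ^ 2 = ‖X‖ ^ 2 + ‖Y‖ ^ 2 := by
  have hYX : (Yᴴ * X).trace = 0 := by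
    have h2 : (Yᴴ * X) = (Xᴴ * Y)ᴴ := by
      rw [conjTranspose_mul, conjTranspose_conjTranspose]
    rw [h2, Matrix.trace_conjTranspose, h, star_zero]
  rw [frob_sq_eq_trace, frob_sq_eq_trace, frob_sq_eq_trace, conjTranspose_add,
    Matrix.add_mul, Matrix.mul_add, Matrix.mul_add, Matrix.trace_add, Matrix.trace_add,
    Matrix.trace_add, h, hYX]
  simp [add_comm]

lemma frob_eq_zero {a b : ℕ} (M : Matrix (Fin a) (Fin b) 𝕂) (h : ‖M‖ = 0) : M = 0 := by
  have h0 : (0:ℝ) ≤ ∑ i, ∑ j, ‖M i j‖ ^ 2 :=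
    Finset.sum_nonneg fun i _ => Finset.sum_nonneg fun j _ => sq_nonneg _
  have h1 : Real.sqrt (∑ i, ∑ j, ‖M i j‖ ^ 2) = 0 := by
    rw [← frobNorm] at *; rw [frobNorm_eq_norm, h]
  have hS : ∑ i, ∑ j, ‖M i j‖ ^ 2 = 0 := by
    have := Real.sq_sqrt h0
    rw [h1] at this; simpa using this.symm
  ext i j
  have hi := (Finset.sum_eq_zero_iff_of_nonneg (fun i _ =>
    Finset.sum_nonneg fun j _ => sq_nonneg ‖M i j‖)).mp hS i (Finset.mem_univ i)
  have hj := (Finset.sum_eq_zero_iff_of_nonneg (fun j _ => sq_nonneg ‖M i j‖)).mp hi j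
    (Finset.mem_univ j)
  have : ‖M i j‖ = 0 := by nlinarith [norm_nonneg (M i j)]
  simpa using this

lemma frob_proj_left {a b : ℕ} (P : Matrix (Fin a) (Fin a) 𝕂) (X : Matrix (Fin a) (Fin b) 𝕂)
    (hP : Pᴴ = P) (hPP : P * P = P) : ‖P * X‖ ≤ ‖X‖ := by
  have hdec : P * X + (1 - P) * X = X := by
    rw [Matrix.sub_mul, Matrix.one_mul]; abel
  have horth : ((P * X)ᴴ * ((1 - P) * X)).trace = 0 := by
    have : (P * X)ᴴ * ((1 - P) * X) = 0 := by
      rw [conjTranspose_mul, hP, Matrix.mul_assoc, ← Matrix.mul_assoc P,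
        Matrix.mul_sub, Matrix.mul_one, hPP, sub_self, Matrix.zero_mul, Matrix.mul_zero]
    rw [this, Matrix.trace_zero]
  have hpy := frob_pythagoras (P * X) ((1 - P) * X) horth
  rw [hdec] at hpy
  nlinarith [norm_nonneg (P * X), norm_nonneg X, norm_nonneg ((1 - P) * X), sq_nonneg ‖(1 - P) * X‖]

lemma frob_proj_right {a b : ℕ} (X : Matrix (Fin a) (Fin b) 𝕂) (P : Matrix (Fin b) (Fin b) 𝕂)
    (hP : Pᴴ = P) (hPP : P * P = P) : ‖X * P‖ ≤ ‖X‖ := by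
  have hdec : X * P + X * (1 - P) = X := by
    rw [Matrix.mul_sub, Matrix.mul_one]; abel
  have horth : ((X * P)ᴴ * (X * (1 - P))).trace = 0 := by
    rw [conjTranspose_mul, hP, Matrix.mul_assoc, Matrix.trace_mul_comm,
      Matrix.mul_assoc, Matrix.mul_assoc, Matrix.sub_mul, Matrix.one_mul, hPP, sub_self,
      Matrix.mul_zero, Matrix.mul_zero, Matrix.trace_zero]
  have hpy := frob_pythagoras (X * P) (X * (1 - P)) horth
  rw [hdec] at hpy
  nlinarith [norm_nonneg (X * P), norm_nonneg X, sq_nonneg ‖X * (1 - P)‖]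

lemma frob_unitary_left {a b c : ℕ} (W : Matrix (Fin a) (Fin b) 𝕂)
    (X : Matrix (Fin b) (Fin c) 𝕂) (hW : Wᴴ * W = 1) : ‖W * X‖ = ‖X‖ := by
  have h1 : ‖W * X‖ ^ 2 = ‖X‖ ^ 2 := by
    rw [frob_sq_eq_trace, frob_sq_eq_trace, conjTranspose_mul, Matrix.mul_assoc,
      ← Matrix.mul_assoc Wᴴ, hW, Matrix.one_mul]
  have h2 := congrArg Real.sqrt h1
  rwa [Real.sqrt_sq (norm_nonneg _), Real.sqrt_sq (norm_nonneg _)] at h2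

lemma frob_unitary_right {a b c : ℕ} (X : Matrix (Fin a) (Fin b) 𝕂)
    (V : Matrix (Fin c) (Fin b) 𝕂) (hV : Vᴴ * V = 1) : ‖X * Vᴴ‖ = ‖X‖ := by
  have h1 : ‖X * Vᴴ‖ ^ 2 = ‖X‖ ^ 2 := by
    rw [frob_sq_eq_trace, frob_sq_eq_trace, conjTranspose_mul, conjTranspose_conjTranspose,
      Matrix.trace_mul_comm, Matrix.mul_assoc X Vᴴ, ← Matrix.mul_assoc Vᴴ, hV,
      Matrix.one_mul, Matrix.trace_mul_comm]
  have h2 := congrArg Real.sqrt h1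
  rwa [Real.sqrt_sq (norm_nonneg _), Real.sqrt_sq (norm_nonneg _)] at h2

lemma rank_left_cancel {a k s : ℕ} (X : Matrix (Fin a) (Fin k) 𝕂) (hX : X.rank = k)
    (Y Z : Matrix (Fin k) (Fin s) 𝕂) (h : X * Y = X * Z) : Y = Z := by
  have hker : LinearMap.ker X.mulVecLin = ⊥ := by
    have h1 := LinearMap.finrank_range_add_finrank_ker X.mulVecLin
    rw [Module.finrank_fintype_fun_eq_card, Fintype.card_fin] at h1
    have h2 : Module.finrank 𝕂 (LinearMap.range X.mulVecLin) = k := hX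
    rw [h2] at h1
    have h3 : Module.finrank 𝕂 (LinearMap.ker X.mulVecLin) = 0 := by omega
    exact Submodule.finrank_eq_zero.mp h3
  have hinj : Function.Injective X.mulVecLin := LinearMap.ker_eq_bot.mp hker
  ext r c
  have hcol : X.mulVecLin (fun i => Y i c) = X.mulVecLin (fun i => Z i c) := by
    funext i
    have := congrFun (congrFun h i) c
    simpa [Matrix.mulVecLin_apply, Matrix.mulVec, dotProduct, Matrix.mul_apply] using this
  exact congrFun (hinj hcol) r

lemma trunc_left {a b k : ℕ} (Ut Uk : Matrix (Fin a) (Fin b) 𝕂) (Ukp : Matrix (Fin b) (Fin a) 𝕂)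
    (hUk : IsTruncSVD Ut Uk k) (hUkp : IsMPInv Uk Ukp) : Uk * Ukp * Ut = Uk := by
  set P : Matrix (Fin a) (Fin a) 𝕂 := Uk * Ukp with hPdef
  have hPH : Pᴴ = P := hUkp.2.2.1
  have hPUk : P * Uk = Uk := by rw [hPdef]; exact hUkp.1
  have hPP : P * P = P := by
    rw [hPdef, ← Matrix.mul_assoc, hUkp.1]
  have hdec : (Ut - P * Ut) + P * (Ut - Uk) = Ut - Uk := by
    rw [Matrix.mul_sub, hPUk]; abel
  have horth : ((Ut - P * Ut)ᴴ * (P * (Ut - Uk))).trace = 0 := by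
    have hz : (Ut - P * Ut)ᴴ * (P * (Ut - Uk)) = 0 := by
      rw [conjTranspose_sub, conjTranspose_mul, hPH, Matrix.sub_mul,
        ← Matrix.mul_assoc (Utᴴ * P) P, Matrix.mul_assoc Utᴴ P P, hPP,
        Matrix.mul_assoc Utᴴ P, sub_self]
    rw [hz, Matrix.trace_zero]
  have hpy := frob_pythagoras (Ut - P * Ut) (P * (Ut - Uk)) horth
  rw [hdec] at hpy
  have hrank : (P * Ut).rank ≤ k := by
    calc (P * Ut).rank = (Uk * (Ukp * Ut)).rank := by rw [hPdef, Matrix.mul_assoc]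
    _ ≤ Uk.rank := Matrix.rank_mul_le_left _ _
    _ ≤ k := hUk.1
  have hmin : ‖Ut - Uk‖ ≤ ‖Ut - P * Ut‖ := by
    have := hUk.2 (P * Ut) hrank
    rwa [frobNorm_eq_norm, frobNorm_eq_norm] at this
  have hzero : P * (Ut - Uk) = 0 := by
    apply frob_eq_zero
    nlinarith [norm_nonneg (P * (Ut - Uk)), norm_nonneg (Ut - Uk), norm_nonneg (Ut - P * Ut)]
  have h5 : P * Ut = P * Uk := sub_eq_zero.mp (by rw [← Matrix.mul_sub, hzero])
  show P * Ut = Uk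
  rw [h5]; exact hPUk

lemma trunc_right {a b k : ℕ} (Ut Uk : Matrix (Fin a) (Fin b) 𝕂) (Ukp : Matrix (Fin b) (Fin a) 𝕂)
    (hUk : IsTruncSVD Ut Uk k) (hUkp : IsMPInv Uk Ukp) : Ut * (Ukp * Uk) = Uk := by
  set Q : Matrix (Fin b) (Fin b) 𝕂 := Ukp * Uk with hQdef
  have hQH : Qᴴ = Q := hUkp.2.2.2
  have hUkQ : Uk * Q = Uk := by rw [hQdef, ← Matrix.mul_assoc]; exact hUkp.1
  have hQQ : Q * Q = Q := by
    rw [hQdef, ← Matrix.mul_assoc, hUkp.2.1]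
  have hdec : (Ut - Ut * Q) + (Ut - Uk) * Q = Ut - Uk := by
    rw [Matrix.sub_mul, hUkQ]; abel
  have horth : ((Ut - Ut * Q)ᴴ * ((Ut - Uk) * Q)).trace = 0 := by
    have hMQ : ((Ut - Uk) * Q) * Q = (Ut - Uk) * Q := by
      rw [Matrix.mul_assoc, hQQ]
    rw [conjTranspose_sub, conjTranspose_mul, hQH, Matrix.sub_mul, Matrix.mul_assoc Q,
      Matrix.trace_sub, Matrix.trace_mul_comm Q, Matrix.mul_assoc Utᴴ, hMQ, sub_self]
  have hpy := frob_pythagoras (Ut - Ut * Q) ((Ut - Uk) * Q) horth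
  rw [hdec] at hpy
  have hrank : (Ut * Q).rank ≤ k := by
    calc (Ut * Q).rank ≤ Q.rank := Matrix.rank_mul_le_right _ _
    _ ≤ Uk.rank := by rw [hQdef]; exact Matrix.rank_mul_le_right _ _
    _ ≤ k := hUk.1
  have hmin : ‖Ut - Uk‖ ≤ ‖Ut - Ut * Q‖ := by
    have := hUk.2 (Ut * Q) hrank
    rwa [frobNorm_eq_norm, frobNorm_eq_norm] at this
  have hzero : (Ut - Uk) * Q = 0 := by
    apply frob_eq_zero
    nlinarith [norm_nonneg ((Ut - Uk) * Q), norm_nonneg (Ut - Uk), norm_nonneg (Ut - Ut * Q)]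
  have h5 : Ut * Q = Uk * Q := sub_eq_zero.mp (by rw [← Matrix.sub_mul, hzero])
  rw [h5]; exact hUkQ

open scoped ComplexOrder in
lemma rank_conjT {a b : ℕ} (M : Matrix (Fin a) (Fin b) 𝕂) : Mᴴ.rank = M.rank :=
  Matrix.rank_conjTranspose M

set_option maxHeartbeats 1000000 in
theorem main_aux {m n k p q : ℕ}
    (A E : Matrix (Fin m) (Fin n) 𝕂)
    (ι : Fin p ↪ Fin m) (κ : Fin q ↪ Fin n)
    (hrankC : (A.submatrix id ⇑κ).rank = k)
    (hrankU : (A.submatrix ⇑ι ⇑κ).rank = k)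
    (hrankR : (A.submatrix ⇑ι id).rank = k)
    (W : Matrix (Fin m) (Fin k) 𝕂) (V : Matrix (Fin n) (Fin k) 𝕂) (d : Fin k → ℝ)
    (hW : Wᴴ * W = 1) (hV : Vᴴ * V = 1)
    (hSVD : A = W * Matrix.diagonal (fun i => (d i : 𝕂)) * Vᴴ)
    (Wp : Matrix (Fin k) (Fin p) 𝕂) (hWp : IsMPInv (W.submatrix ⇑ι id) Wp)
    (Vp : Matrix (Fin k) (Fin q) 𝕂) (hVp : IsMPInv (V.submatrix ⇑κ id) Vp)
    (Uk : Matrix (Fin p) (Fin q) 𝕂) (hUk : IsTruncSVD ((A + E).submatrix ⇑ι ⇑κ) Uk k)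
    (Ukp : Matrix (Fin q) (Fin p) 𝕂) (hUkp : IsMPInv Uk Ukp) :
    frobNorm (A - (A + E).submatrix id ⇑κ * Ukp * (A + E).submatrix ⇑ι id) ≤
      frobNorm Wp * frobNorm (E.submatrix ⇑ι id) + frobNorm Vp * frobNorm (E.submatrix id ⇑κ) +
        4 * (frobNorm Wp * frobNorm Vp) * frobNorm (E.submatrix ⇑ι ⇑κ) +
        frobNorm Ukp *
          ((frobNorm Wp * frobNorm (E.submatrix ⇑ι id) +
              frobNorm Vp * frobNorm (E.submatrix id ⇑κ) +
              frobNorm Wp * frobNorm Vp * frobNorm (E.submatrix ⇑ι ⇑κ)) *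
              frobNorm (E.submatrix ⇑ι ⇑κ) +
            frobNorm (E.submatrix ⇑ι id) * frobNorm (E.submatrix id ⇑κ)) := by
  -- abbreviations
  set WI : Matrix (Fin p) (Fin k) 𝕂 := W.submatrix ⇑ι id with hWIdef
  set VJ : Matrix (Fin q) (Fin k) 𝕂 := V.submatrix ⇑κ id with hVJdef
  set D : Matrix (Fin k) (Fin k) 𝕂 := Matrix.diagonal (fun i => (d i : 𝕂)) with hDdef
  set U : Matrix (Fin p) (Fin q) 𝕂 := A.submatrix ⇑ι ⇑κ with hUdef
  set Ut : Matrix (Fin p) (Fin q) 𝕂 := (A + E).submatrix ⇑ι ⇑κ with hUtdef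
  set Ct : Matrix (Fin m) (Fin q) 𝕂 := (A + E).submatrix id ⇑κ with hCtdef
  set Rt : Matrix (Fin p) (Fin n) 𝕂 := (A + E).submatrix ⇑ι id with hRtdef
  set EI : Matrix (Fin p) (Fin n) 𝕂 := E.submatrix ⇑ι id with hEIdef
  set EJ : Matrix (Fin m) (Fin q) 𝕂 := E.submatrix id ⇑κ with hEJdef
  set EIJ : Matrix (Fin p) (Fin q) 𝕂 := E.submatrix ⇑ι ⇑κ with hEIJdef
  set Q : Matrix (Fin m) (Fin p) 𝕂 := W * Wp with hQdef
  set P : Matrix (Fin q) (Fin n) 𝕂 := Vpᴴ * Vᴴ with hPdef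
  -- submatrix structure
  have hA_R : A.submatrix ⇑ι id = WI * (D * Vᴴ) := by
    rw [hSVD, Matrix.mul_assoc, Matrix.submatrix_mul W (D * Vᴴ) ⇑ι id id Function.bijective_id,
      Matrix.submatrix_id_id]
  have hA_C : A.submatrix id ⇑κ = (W * D) * VJᴴ := by
    rw [hSVD, Matrix.submatrix_mul (W * D) Vᴴ id id ⇑κ Function.bijective_id,
      Matrix.submatrix_id_id, Matrix.conjTranspose_submatrix]
  have hA_U : U = WI * D * VJᴴ := by
    rw [hUdef, hSVD, Matrix.submatrix_mul (W * D) Vᴴ ⇑ι id ⇑κ Function.bijective_id,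
      Matrix.submatrix_mul W D ⇑ι id id Function.bijective_id, Matrix.submatrix_id_id,
      Matrix.conjTranspose_submatrix]
  -- full column ranks and one-sided inverses
  have hrkWI : WI.rank = k := by
    have h1 : WI.rank ≤ k := by simpa using WI.rank_le_card_width
    have h2 : (A.submatrix ⇑ι id).rank ≤ WI.rank := by
      rw [hA_R]; exact Matrix.rank_mul_le_left _ _
    omega
  have hrkVJ : VJ.rank = k := by
    have h1 : VJ.rank ≤ k := by simpa using VJ.rank_le_card_width
    have h2 : (A.submatrix id ⇑κ).rank ≤ VJ.rank := by
      rw [hA_C, ← rank_conjT VJ]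
      exact Matrix.rank_mul_le_right _ _
    omega
  have hWleft : Wp * WI = 1 := by
    refine rank_left_cancel WI hrkWI _ _ ?_
    rw [Matrix.mul_one, ← Matrix.mul_assoc]; exact hWp.1
  have hVleft : Vp * VJ = 1 := by
    refine rank_left_cancel VJ hrkVJ _ _ ?_
    rw [Matrix.mul_one, ← Matrix.mul_assoc]; exact hVp.1
  have hVright : VJᴴ * Vpᴴ = 1 := by
    have := congrArg Matrix.conjTranspose hVleft
    simpa [Matrix.conjTranspose_mul] using this
  -- exact reconstruction identities
  have hQWI : Q * WI = W := by rw [hQdef, Matrix.mul_assoc, hWleft, Matrix.mul_one]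
  have hQU : Q * U = A.submatrix id ⇑κ := by
    rw [hA_U, hA_C, Matrix.mul_assoc WI D VJᴴ, ← Matrix.mul_assoc Q WI (D * VJᴴ), hQWI,
      ← Matrix.mul_assoc]
  have hUP : U * P = A.submatrix ⇑ι id := by
    rw [hA_U, hA_R, hPdef, Matrix.mul_assoc (WI * D) VJᴴ (Vpᴴ * Vᴴ),
      ← Matrix.mul_assoc VJᴴ Vpᴴ Vᴴ, hVright, Matrix.one_mul, Matrix.mul_assoc]
  have hA : Q * U * P = A := by
    rw [hQU, hA_C, hPdef, Matrix.mul_assoc (W * D) VJᴴ (Vpᴴ * Vᴴ),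
      ← Matrix.mul_assoc VJᴴ Vpᴴ Vᴴ, hVright, Matrix.one_mul, ← hSVD]
  -- truncation structure
  have hUt : Ut = U + EIJ := by
    ext i j; simp [hUtdef, hUdef, hEIJdef, Matrix.submatrix_apply, Matrix.add_apply]
  have hL : Uk * Ukp * Ut = Uk := trunc_left Ut Uk Ukp hUk hUkp
  have hR : Ut * (Ukp * Uk) = Uk := trunc_right Ut Uk Ukp hUk hUkp
  have h3 : Ukp * Uk = Ukp * Ut := by
    conv_lhs => rw [← hL]
    rw [← Matrix.mul_assoc, ← Matrix.mul_assoc, hUkp.2.1]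
  have h4 : Uk * Ukp = Ut * Ukp := by
    conv_lhs => rw [← hR]
    rw [Matrix.mul_assoc, Matrix.mul_assoc, ← Matrix.mul_assoc Ukp Uk Ukp, hUkp.2.1]
  have hKey : Ut * Ukp * Ut = Uk := by rw [← h4]; exact hL
  -- perturbed column/row factors
  set EhJ : Matrix (Fin m) (Fin q) 𝕂 := EJ - Q * EIJ with hEhJdef
  set EhI : Matrix (Fin p) (Fin n) 𝕂 := EI - EIJ * P with hEhIdef
  have hCt' : Ct = Q * Ut + EhJ := by
    have h0 : Ct = A.submatrix id ⇑κ + EJ := by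
      ext i j; simp [hCtdef, hEJdef, Matrix.submatrix_apply, Matrix.add_apply]
    rw [h0, ← hQU, hUt, hEhJdef, Matrix.mul_add]; abel
  have hRt' : Rt = Ut * P + EhI := by
    have h0 : Rt = A.submatrix ⇑ι id + EI := by
      ext i j; simp [hRtdef, hEIdef, Matrix.submatrix_apply, Matrix.add_apply]
    rw [h0, ← hUP, hUt, hEhIdef, Matrix.add_mul]; abel
  have hA' : A = Q * (Ut * P) - Q * (EIJ * P) := by
    rw [hUt, Matrix.add_mul, Matrix.mul_add, ← Matrix.mul_assoc Q U P, hA]; abel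
  have t1 : Q * Ut * Ukp * (Ut * P) = Q * (Uk * P) := by
    rw [Matrix.mul_assoc Q Ut Ukp, Matrix.mul_assoc Q (Ut * Ukp) (Ut * P),
      ← Matrix.mul_assoc (Ut * Ukp) Ut P, hKey]
  have t2 : Q * Ut * Ukp * EhI = Q * ((Uk * Ukp) * EhI) := by
    rw [Matrix.mul_assoc Q Ut Ukp, ← h4, Matrix.mul_assoc]
  have t3 : EhJ * Ukp * (Ut * P) = (EhJ * (Ukp * Uk)) * P := by
    rw [Matrix.mul_assoc EhJ Ukp (Ut * P), ← Matrix.mul_assoc Ukp Ut P, ← h3,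
      ← Matrix.mul_assoc EhJ (Ukp * Uk) P]
  have t4 : EhJ * Ukp * EhI = EhJ * (Ukp * EhI) := Matrix.mul_assoc _ _ _
  have hexp : Ct * Ukp * Rt =
      Q * (Uk * P) + Q * ((Uk * Ukp) * EhI) + (EhJ * (Ukp * Uk)) * P + EhJ * (Ukp * EhI) := by
    rw [hCt', hRt', Matrix.add_mul, Matrix.add_mul, Matrix.mul_add, Matrix.mul_add,
      t1, t2, t3, t4]
    abel
  have hiden : A - Ct * Ukp * Rt =
      Q * ((Ut - Uk) * P) - Q * (EIJ * P) - Q * ((Uk * Ukp) * EhI)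
        - (EhJ * (Ukp * Uk)) * P - EhJ * (Ukp * EhI) := by
    have e1 : Q * ((Ut - Uk) * P) = Q * (Ut * P) - Q * (Uk * P) := by
      rw [Matrix.sub_mul, Matrix.mul_sub]
    rw [hexp, e1]
    conv_lhs => rw [hA']
    abel
  -- norm machinery
  have hQn : ∀ {s : ℕ} (X : Matrix (Fin p) (Fin s) 𝕂), ‖Q * X‖ ≤ ‖Wp‖ * ‖X‖ := by
    intro s X
    rw [hQdef, Matrix.mul_assoc, frob_unitary_left W (Wp * X) hW]
    exact Matrix.frobenius_norm_mul _ _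
  have hPn : ∀ {s : ℕ} (X : Matrix (Fin s) (Fin q) 𝕂), ‖X * P‖ ≤ ‖X‖ * ‖Vp‖ := by
    intro s X
    rw [hPdef, ← Matrix.mul_assoc, frob_unitary_right (X * Vpᴴ) V hV]
    calc ‖X * Vpᴴ‖ ≤ ‖X‖ * ‖Vpᴴ‖ := Matrix.frobenius_norm_mul _ _
      _ = ‖X‖ * ‖Vp‖ := by rw [Matrix.frobenius_norm_conjTranspose]
  have hUkUkpH : (Uk * Ukp)ᴴ = Uk * Ukp := hUkp.2.2.1
  have hUkUkpP : (Uk * Ukp) * (Uk * Ukp) = Uk * Ukp := by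
    rw [← Matrix.mul_assoc, hUkp.1]
  have hUkpUkH : (Ukp * Uk)ᴴ = Ukp * Uk := hUkp.2.2.2
  have hUkpUkP : (Ukp * Uk) * (Ukp * Uk) = Ukp * Uk := by
    rw [← Matrix.mul_assoc, hUkp.2.1]
  have hG : ‖Ut - Uk‖ ≤ ‖EIJ‖ := by
    have h0 := hUk.2 U (le_of_eq hrankU)
    have h1 : Ut - U = EIJ := by rw [hUt]; abel
    rwa [frobNorm_eq_norm, frobNorm_eq_norm, h1] at h0
  have hEhI : ‖EhI‖ ≤ ‖EI‖ + ‖EIJ‖ * ‖Vp‖ := by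
    rw [hEhIdef]
    exact (norm_sub_le _ _).trans (add_le_add_right (hPn EIJ) _)
  have hEhJ : ‖EhJ‖ ≤ ‖EJ‖ + ‖Wp‖ * ‖EIJ‖ := by
    rw [hEhJdef]
    exact (norm_sub_le _ _).trans (add_le_add_right (hQn EIJ) _)
  have b1 : ‖Q * ((Ut - Uk) * P)‖ ≤ ‖Wp‖ * (‖EIJ‖ * ‖Vp‖) := by
    refine (hQn _).trans (mul_le_mul_of_nonneg_left ((hPn _).trans ?_) (norm_nonneg Wp))
    exact mul_le_mul_of_nonneg_right hG (norm_nonneg Vp)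
  have b2 : ‖Q * (EIJ * P)‖ ≤ ‖Wp‖ * (‖EIJ‖ * ‖Vp‖) :=
    (hQn _).trans (mul_le_mul_of_nonneg_left (hPn _) (norm_nonneg Wp))
  have b3 : ‖Q * ((Uk * Ukp) * EhI)‖ ≤ ‖Wp‖ * (‖EI‖ + ‖EIJ‖ * ‖Vp‖) :=
    (hQn _).trans (mul_le_mul_of_nonneg_left
      ((frob_proj_left _ _ hUkUkpH hUkUkpP).trans hEhI) (norm_nonneg Wp))
  have b4 : ‖(EhJ * (Ukp * Uk)) * P‖ ≤ (‖EJ‖ + ‖Wp‖ * ‖EIJ‖) * ‖Vp‖ :=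
    (hPn _).trans (mul_le_mul_of_nonneg_right
      ((frob_proj_right _ _ hUkpUkH hUkpUkP).trans hEhJ) (norm_nonneg Vp))
  have b5 : ‖EhJ * (Ukp * EhI)‖ ≤
      (‖EJ‖ + ‖Wp‖ * ‖EIJ‖) * (‖Ukp‖ * (‖EI‖ + ‖EIJ‖ * ‖Vp‖)) := by
    refine (Matrix.frobenius_norm_mul _ _).trans ?_
    refine mul_le_mul hEhJ ?_ (norm_nonneg _) (by positivity)
    exact (Matrix.frobenius_norm_mul _ _).trans
      (mul_le_mul_of_nonneg_left hEhI (norm_nonneg Ukp))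
  have tri : ‖A - Ct * Ukp * Rt‖ ≤
      ‖Q * ((Ut - Uk) * P)‖ + ‖Q * (EIJ * P)‖ + ‖Q * ((Uk * Ukp) * EhI)‖
        + ‖(EhJ * (Ukp * Uk)) * P‖ + ‖EhJ * (Ukp * EhI)‖ := by
    rw [hiden]
    calc ‖Q * ((Ut - Uk) * P) - Q * (EIJ * P) - Q * ((Uk * Ukp) * EhI)
          - (EhJ * (Ukp * Uk)) * P - EhJ * (Ukp * EhI)‖
        ≤ ‖Q * ((Ut - Uk) * P) - Q * (EIJ * P) - Q * ((Uk * Ukp) * EhI)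
          - (EhJ * (Ukp * Uk)) * P‖ + ‖EhJ * (Ukp * EhI)‖ := norm_sub_le _ _
      _ ≤ (‖Q * ((Ut - Uk) * P) - Q * (EIJ * P) - Q * ((Uk * Ukp) * EhI)‖
          + ‖(EhJ * (Ukp * Uk)) * P‖) + ‖EhJ * (Ukp * EhI)‖ := by
          gcongr; exact norm_sub_le _ _
      _ ≤ ((‖Q * ((Ut - Uk) * P) - Q * (EIJ * P)‖ + ‖Q * ((Uk * Ukp) * EhI)‖)
          + ‖(EhJ * (Ukp * Uk)) * P‖) + ‖EhJ * (Ukp * EhI)‖ := by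
          gcongr; exact norm_sub_le _ _
      _ ≤ (((‖Q * ((Ut - Uk) * P)‖ + ‖Q * (EIJ * P)‖) + ‖Q * ((Uk * Ukp) * EhI)‖)
          + ‖(EhJ * (Ukp * Uk)) * P‖) + ‖EhJ * (Ukp * EhI)‖ := by
          gcongr; exact norm_sub_le _ _
  simp only [frobNorm_eq_norm]
  refine (tri.trans (add_le_add (add_le_add (add_le_add (add_le_add b1 b2) b3) b4) b5)).trans
    (le_of_eq ?_)
  ring

end Helpers

/-- Proposition 8.4: preliminary bound for the rank-truncated middle matrix. -/
theorem rank_truncated_middle_preliminary {𝕂 : Type} [RCLike 𝕂] {m n k p q : ℕ}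
    (A E : Matrix (Fin m) (Fin n) 𝕂)
    (hrankA : A.rank = k)
    (ι : Fin p ↪ Fin m) (κ : Fin q ↪ Fin n)
    (hrankC : (A.submatrix id ⇑κ).rank = k)
    (hrankU : (A.submatrix ⇑ι ⇑κ).rank = k)
    (hrankR : (A.submatrix ⇑ι id).rank = k)
    (W : Matrix (Fin m) (Fin k) 𝕂) (V : Matrix (Fin n) (Fin k) 𝕂) (d : Fin k → ℝ)
    (hW : Wᴴ * W = 1) (hV : Vᴴ * V = 1)
    (hmono : ∀ i j : Fin k, i ≤ j → d j ≤ d i) (hpos : ∀ i, 0 < d i)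
    (hSVD : A = W * Matrix.diagonal (fun i => (d i : 𝕂)) * Vᴴ)
    (Wp : Matrix (Fin k) (Fin p) 𝕂) (hWp : IsMPInv (W.submatrix ⇑ι id) Wp)
    (Vp : Matrix (Fin k) (Fin q) 𝕂) (hVp : IsMPInv (V.submatrix ⇑κ id) Vp)
    (Uk : Matrix (Fin p) (Fin q) 𝕂) (hUk : IsTruncSVD ((A + E).submatrix ⇑ι ⇑κ) Uk k)
    (Ukp : Matrix (Fin q) (Fin p) 𝕂) (hUkp : IsMPInv Uk Ukp) :
    frobNorm (A - (A + E).submatrix id ⇑κ * Ukp * (A + E).submatrix ⇑ι id) ≤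
      frobNorm Wp * frobNorm (E.submatrix ⇑ι id) + frobNorm Vp * frobNorm (E.submatrix id ⇑κ) +
        4 * (frobNorm Wp * frobNorm Vp) * frobNorm (E.submatrix ⇑ι ⇑κ) +
        frobNorm Ukp *
          ((frobNorm Wp * frobNorm (E.submatrix ⇑ι id) +
              frobNorm Vp * frobNorm (E.submatrix id ⇑κ) +
              frobNorm Wp * frobNorm Vp * frobNorm (E.submatrix ⇑ι ⇑κ)) *
              frobNorm (E.submatrix ⇑ι ⇑κ) +
            frobNorm (E.submatrix ⇑ι id) * frobNorm (E.submatrix id ⇑κ)) := by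
  exact main_aux A E ι κ hrankC hrankU hrankR W V d hW hV hSVD Wp hWp Vp hVp Uk hUk Ukp hUkp
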